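/- arXiv:1209.3505 — 3 statements merged into one kernel-verified Lean document; each statement's English description precedes it below -/
import Mathlib

section
/- Let α > 2 and let θ_p, θ_s, P_p, p_t, μ_p, μ_s be positive reals and λ_p ≥ 0, with θ_p^{−2/α}·μ_p − λ_p > 0. Define f₁(P_s) = (1/p_t)·(θ_p^{−2/α}·μ_p − λ_p)·(P_s/P_p)^{−2/α} and f₂(P_s) = (1/p_t)·(θ_s^{−2/α}·μ_s − λ_p·(P_s/P_p)^{−2/α}) for P_s > 0. Then the unique P_s > 0 with f₁(P_s) = f₂(P_s) is P_s* = (θ_s/θ_p)·(μ_s/μ_p)^{−α/2}·P_p, and the common value is f₁(P_s*) = f₂(P_s*) = μ_s·(μ_p − θ_p^{2/α}·λ_p) / (p_t·θ_s^{2/α}·μ_p). -/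
/-- The unique positive `P_s` with `f₁(P_s) = f₂(P_s)` is
`P_s* = (θ_s/θ_p)(μ_s/μ_p)^{-α/2} P_p`, and the common value is
`μ_s(μ_p - θ_p^{2/α} l_p)/(p_t θ_s^{2/α} μ_p)`. -/
theorem stmt5 (α θp θs Pp pt lp μp μs : ℝ) (hα : 2 < α) (hθp : 0 < θp)
    (hθs : 0 < θs) (hPp : 0 < Pp) (hpt : 0 < pt) (hμp : 0 < μp) (hμs : 0 < μs)
    (hlp : 0 ≤ lp) (h : 0 < θp ^ (-(2 / α)) * μp - lp) :
    (0 < (θs / θp) * (μs / μp) ^ (-(α / 2)) * Pp) ∧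
    (1 / pt) * (θp ^ (-(2 / α)) * μp - lp) *
        (((θs / θp) * (μs / μp) ^ (-(α / 2)) * Pp) / Pp) ^ (-(2 / α)) =
      μs * (μp - θp ^ (2 / α) * lp) / (pt * θs ^ (2 / α) * μp) ∧
    (1 / pt) * (θs ^ (-(2 / α)) * μs -
        lp * (((θs / θp) * (μs / μp) ^ (-(α / 2)) * Pp) / Pp) ^ (-(2 / α))) =
      μs * (μp - θp ^ (2 / α) * lp) / (pt * θs ^ (2 / α) * μp) ∧
    ∀ Ps : ℝ, 0 < Ps →
      (1 / pt) * (θp ^ (-(2 / α)) * μp - lp) * (Ps / Pp) ^ (-(2 / α)) =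
        (1 / pt) * (θs ^ (-(2 / α)) * μs - lp * (Ps / Pp) ^ (-(2 / α))) →
      Ps = (θs / θp) * (μs / μp) ^ (-(α / 2)) * Pp := by
  have hα0 : (0:ℝ) < α := by linarith
  have hαne : α ≠ 0 := ne_of_gt hα0
  have ha : (0:ℝ) < θp ^ (2/α) := Real.rpow_pos_of_pos hθp _
  have hb : (0:ℝ) < θs ^ (2/α) := Real.rpow_pos_of_pos hθs _
  have hap : θp ^ (-(2/α)) = (θp ^ (2/α))⁻¹ := Real.rpow_neg hθp.le _
  have hbp : θs ^ (-(2/α)) = (θs ^ (2/α))⁻¹ := Real.rpow_neg hθs.le _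
  have hμ : (0:ℝ) < μs/μp := div_pos hμs hμp
  have hc0 : (0:ℝ) < (μs/μp) ^ (-(α/2)) := Real.rpow_pos_of_pos hμ _
  have hcpos : 0 < (θs/θp) * (μs/μp) ^ (-(α/2)) :=
    mul_pos (div_pos hθs hθp) hc0
  have hmul : (-(α/2)) * (-(2/α)) = 1 := by field_simp
  have hmul' : (-(2/α)) * (-(α/2)) = 1 := by field_simp
  -- cancel Pp
  have hcancel : ((θs / θp) * (μs / μp) ^ (-(α / 2)) * Pp) / Pp
      = (θs / θp) * (μs / μp) ^ (-(α / 2)) :=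
    mul_div_cancel_right₀ _ hPp.ne'
  -- key value of x*
  have hdiv : (θs/θp) ^ (-(2/α)) = θs ^ (-(2/α)) / θp ^ (-(2/α)) :=
    Real.div_rpow hθs.le hθp.le _
  have hkey : ((θs/θp) * (μs/μp) ^ (-(α/2))) ^ (-(2/α))
      = (θs ^ (2/α))⁻¹ * (θp ^ (2/α)) * (μs/μp) := by
    rw [Real.mul_rpow (div_pos hθs hθp).le hc0.le, ← Real.rpow_mul hμ.le,
      hmul, Real.rpow_one, hdiv, hap, hbp]
    field_simp
  have hθp' : θp ^ (2/α) ≠ 0 := ha.ne'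
  have hθs' : θs ^ (2/α) ≠ 0 := hb.ne'
  refine ⟨mul_pos hcpos hPp, ?_, ?_, ?_⟩
  · rw [hcancel, hkey, hap]
    field_simp
  · rw [hcancel, hkey, hbp]
    field_simp
  · intro Ps hPs heq
    rw [hap, hbp] at heq
    set y := (Ps/Pp) ^ (-(2/α)) with hy
    have hy0 : 0 < y := Real.rpow_pos_of_pos (div_pos hPs hPp) _
    rw [mul_assoc] at heq
    have h2 := mul_left_cancel₀ (one_div_ne_zero hpt.ne') heq
    have h1 : (θp ^ (2/α))⁻¹ * μp * y = (θs ^ (2/α))⁻¹ * μs := by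
      linear_combination h2
    have hyval : y = (θp/θs) ^ (2/α) * (μs/μp) := by
      have h3 : y = θp ^ (2/α) * μp⁻¹ * ((θp ^ (2/α))⁻¹ * μp * y) := by
        field_simp
      rw [h1] at h3
      rw [Real.div_rpow hθp.le hθs.le, h3]
      field_simp
    have hPP : Ps/Pp = (θs/θp) * (μs/μp) ^ (-(α/2)) := by
      have hPsPp : Ps/Pp = y ^ (-(α/2)) := by
        rw [hy, ← Real.rpow_mul (div_pos hPs hPp).le, hmul', Real.rpow_one]
      rw [hPsPp, hyval,
        Real.mul_rpow (Real.rpow_pos_of_pos (div_pos hθp hθs) _).le hμ.le,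
        ← Real.rpow_mul (div_pos hθp hθs).le]
      have : (2/α) * (-(α/2)) = -1 := by field_simp
      rw [this, Real.rpow_neg_one, inv_div]
    exact (div_eq_iff hPp.ne').mp hPP
end

section
/- Let α > 2 and let θ_p, θ_s, P_p, p_t, μ_p, μ_s, η, r_h, λ_p be reals with θ_p, θ_s, P_p, p_t, μ_p, μ_s, r_h > 0, 0 < η ≤ 1, λ_p ≥ 0, θ_p^{−2/α}·μ_p − λ_p > 0, and θ_s^{−2/α}·μ_s − η^{−2/α}·r_h²·λ_p > 0. Suppose η·r_h^{−α} < (θ_s/θ_p)·(μ_s/μ_p)^{−α/2}. Consider the feasible set S of pairs (P_s, λ_s) with 0 < P_s ≤ η·P_p·r_h^{−α}, λ_s ≥ 0, θ_p^{2/α}·(p_t·λ_s·(P_s/P_p)^{2/α} + λ_p) ≤ μ_p, and θ_s^{2/α}·(p_t·λ_s + λ_p·(P_s/P_p)^{−2/α}) ≤ μ_s. Then the maximum of the objective p_t·λ_s·log₂(1+θ_s) over S equals (θ_s^{−2/α}·μ_s − η^{−2/α}·r_h²·λ_p)·log₂(1+θ_s), and it is attained at P_s* = η·P_p·r_h^{−α}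 and λ_s* = (1/p_t)·(θ_s^{−2/α}·μ_s − η^{−2/α}·r_h²·λ_p). -/
/-- Case 1 of Proposition 2: if `η r_h^{-α} < (θ_s/θ_p)(μ_s/μ_p)^{-α/2}`, the maximum
secondary throughput over the feasible set is
`(θ_s^{-2/α} μ_s - η^{-2/α} r_h² l_p) log₂(1+θ_s)`, attained at
`P_s* = η P_p r_h^{-α}` and `l_s* = (1/p_t)(θ_s^{-2/α} μ_s - η^{-2/α} r_h² l_p)`. -/
theorem stmt8 (α θp θs Pp pt μp μs η rh lp : ℝ)
    (hα : 2 < α) (hθp : 0 < θp) (hθs : 0 < θs) (hPp : 0 < Pp) (hpt : 0 < pt)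
    (hμp : 0 < μp) (hμs : 0 < μs) (hrh : 0 < rh) (hη0 : 0 < η) (hη1 : η ≤ 1)
    (hlp : 0 ≤ lp)
    (h1 : 0 < θp ^ (-(2 / α)) * μp - lp)
    (h2 : 0 < θs ^ (-(2 / α)) * μs - η ^ (-(2 / α)) * rh ^ 2 * lp)
    (hcase : η * rh ^ (-α) < (θs / θp) * (μs / μp) ^ (-(α / 2))) :
    IsGreatest
      {c : ℝ | ∃ Ps ls : ℝ, 0 < Ps ∧ Ps ≤ η * Pp * rh ^ (-α) ∧ 0 ≤ ls ∧
        θp ^ (2 / α) * (pt * ls * (Ps / Pp) ^ (2 / α) + lp) ≤ μp ∧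
        θs ^ (2 / α) * (pt * ls + lp * (Ps / Pp) ^ (-(2 / α))) ≤ μs ∧
        c = pt * ls * Real.logb 2 (1 + θs)}
      ((θs ^ (-(2 / α)) * μs - η ^ (-(2 / α)) * rh ^ 2 * lp) * Real.logb 2 (1 + θs)) ∧
    (0 < η * Pp * rh ^ (-α) ∧
      η * Pp * rh ^ (-α) ≤ η * Pp * rh ^ (-α) ∧
      0 ≤ (1 / pt) * (θs ^ (-(2 / α)) * μs - η ^ (-(2 / α)) * rh ^ 2 * lp) ∧
      θp ^ (2 / α) * (pt * ((1 / pt) * (θs ^ (-(2 / α)) * μs - η ^ (-(2 / α)) * rh ^ 2 * lp)) *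
          ((η * Pp * rh ^ (-α)) / Pp) ^ (2 / α) + lp) ≤ μp ∧
      θs ^ (2 / α) * (pt * ((1 / pt) * (θs ^ (-(2 / α)) * μs - η ^ (-(2 / α)) * rh ^ 2 * lp)) +
          lp * ((η * Pp * rh ^ (-α)) / Pp) ^ (-(2 / α))) ≤ μs ∧
      pt * ((1 / pt) * (θs ^ (-(2 / α)) * μs - η ^ (-(2 / α)) * rh ^ 2 * lp)) *
          Real.logb 2 (1 + θs) =
        (θs ^ (-(2 / α)) * μs - η ^ (-(2 / α)) * rh ^ 2 * lp) * Real.logb 2 (1 + θs)) := by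
  have hα0 : 0 < α := by linarith
  have ha : 0 < 2 / α := by positivity
  have hlog : 0 ≤ Real.logb 2 (1 + θs) := Real.logb_nonneg (by norm_num) (by linarith)
  have hK : 0 < η * rh ^ (-α) := by positivity
  have hPsPp : (η * Pp * rh ^ (-α)) / Pp = η * rh ^ (-α) := by
    field_simp
  have hr2 : (rh ^ (-α)) ^ (-(2 / α)) = rh ^ 2 := by
    rw [← Real.rpow_natCast rh 2, ← Real.rpow_mul hrh.le]
    congr 1
    push_cast
    field_simp
  have hKinv : (η * rh ^ (-α)) ^ (-(2 / α)) = η ^ (-(2 / α)) * rh ^ 2 := by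
    rw [Real.mul_rpow hη0.le (by positivity), hr2]
  have hK1 : (η * rh ^ (-α)) ^ (2 / α) * (η ^ (-(2 / α)) * rh ^ 2) = 1 := by
    rw [← hKinv, ← Real.rpow_add hK]
    simp
  have hTs : θs ^ (2 / α) * θs ^ (-(2 / α)) = 1 := by
    rw [← Real.rpow_add hθs]; simp
  have hTp : θp ^ (2 / α) * θp ^ (-(2 / α)) = 1 := by
    rw [← Real.rpow_add hθp]; simp
  have hTs0 : 0 < θs ^ (2 / α) := by positivity
  have hptM : pt * ((1 / pt) * (θs ^ (-(2 / α)) * μs - η ^ (-(2 / α)) * rh ^ 2 * lp))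
      = θs ^ (-(2 / α)) * μs - η ^ (-(2 / α)) * rh ^ 2 * lp := by
    field_simp
  -- primary constraint at the star point
  have hprim : θp ^ (2 / α) *
      ((θs ^ (-(2 / α)) * μs - η ^ (-(2 / α)) * rh ^ 2 * lp) * (η * rh ^ (-α)) ^ (2 / α) + lp)
      ≤ μp := by
    have hKle : (η * rh ^ (-α)) ^ (2 / α) ≤
        ((θs / θp) * (μs / μp) ^ (-(α / 2))) ^ (2 / α) :=
      Real.rpow_le_rpow hK.le hcase.le ha.le
    have hRHS : ((θs / θp) * (μs / μp) ^ (-(α / 2))) ^ (2 / α)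
        = θs ^ (2 / α) * θp ^ (-(2 / α)) * (μp / μs) := by
      rw [Real.mul_rpow (by positivity) (by positivity),
        Real.div_rpow hθs.le hθp.le, ← Real.rpow_mul (by positivity),
        show (-(α / 2)) * (2 / α) = -1 by field_simp,
        Real.rpow_neg_one, inv_div, Real.rpow_neg hθp.le, div_eq_mul_inv]
    rw [hRHS] at hKle
    have hinner : (θs ^ (-(2 / α)) * μs - η ^ (-(2 / α)) * rh ^ 2 * lp) *
        (η * rh ^ (-α)) ^ (2 / α) + lp
        = θs ^ (-(2 / α)) * μs * (η * rh ^ (-α)) ^ (2 / α) := by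
      linear_combination (-lp) * hK1
    rw [hinner]
    calc θp ^ (2 / α) * (θs ^ (-(2 / α)) * μs * (η * rh ^ (-α)) ^ (2 / α))
        ≤ θp ^ (2 / α) * (θs ^ (-(2 / α)) * μs *
            (θs ^ (2 / α) * θp ^ (-(2 / α)) * (μp / μs))) := by
          gcongr
      _ = μp := by
          have he : θp ^ (2 / α) * (θs ^ (-(2 / α)) * μs *
              (θs ^ (2 / α) * θp ^ (-(2 / α)) * (μp / μs)))
              = (θp ^ (2 / α) * θp ^ (-(2 / α))) * (θs ^ (2 / α) * θs ^ (-(2 / α)))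
                * (μs * (μp / μs)) := by ring
          rw [he, hTp, hTs]
          field_simp
  -- secondary constraint at the star point (equality)
  have hsec : θs ^ (2 / α) *
      ((θs ^ (-(2 / α)) * μs - η ^ (-(2 / α)) * rh ^ 2 * lp) +
        lp * (η ^ (-(2 / α)) * rh ^ 2)) = μs := by
    have he : (θs ^ (-(2 / α)) * μs - η ^ (-(2 / α)) * rh ^ 2 * lp) +
        lp * (η ^ (-(2 / α)) * rh ^ 2) = θs ^ (-(2 / α)) * μs := by ring
    rw [he]
    linear_combination μs * hTs
  refine ⟨⟨⟨η * Pp * rh ^ (-α), (1 / pt) * (θs ^ (-(2 / α)) * μs - η ^ (-(2 / α)) * rh ^ 2 * lp),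
      by positivity, le_refl _, by positivity, ?_, ?_, ?_⟩, ?_⟩, by positivity, le_refl _,
      by positivity, ?_, ?_, ?_⟩
  · rw [hPsPp, hptM]; exact hprim
  · rw [hPsPp, hKinv, hptM]; exact hsec.le
  · rw [hptM]
  · -- upper bound
    rintro c ⟨Ps, ls, hPs, hPsle, hls, _, hsc, rfl⟩
    have hx : 0 < Ps / Pp := div_pos hPs hPp
    have hx2 : Ps / Pp ≤ η * rh ^ (-α) := by
      rw [div_le_iff₀ hPp]
      linarith [hPsle, show η * Pp * rh ^ (-α) = η * rh ^ (-α) * Pp from by ring]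
    have hmono : (η * rh ^ (-α)) ^ (-(2 / α)) ≤ (Ps / Pp) ^ (-(2 / α)) :=
      Real.rpow_le_rpow_of_nonpos hx hx2 (by linarith)
    rw [hKinv] at hmono
    have h3 : θs ^ (2 / α) * (pt * ls + lp * (η ^ (-(2 / α)) * rh ^ 2)) ≤ μs := by
      have h5 : lp * (η ^ (-(2 / α)) * rh ^ 2) ≤ lp * (Ps / Pp) ^ (-(2 / α)) :=
        mul_le_mul_of_nonneg_left hmono hlp
      calc θs ^ (2 / α) * (pt * ls + lp * (η ^ (-(2 / α)) * rh ^ 2))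
          ≤ θs ^ (2 / α) * (pt * ls + lp * (Ps / Pp) ^ (-(2 / α))) := by
            exact mul_le_mul_of_nonneg_left (by linarith) hTs0.le
        _ ≤ μs := hsc
    have h4 : θs ^ (2 / α) * (pt * ls) ≤
        θs ^ (2 / α) * (θs ^ (-(2 / α)) * μs - η ^ (-(2 / α)) * rh ^ 2 * lp) := by
      have he : θs ^ (2 / α) * (θs ^ (-(2 / α)) * μs - η ^ (-(2 / α)) * rh ^ 2 * lp)
          = μs - θs ^ (2 / α) * (lp * (η ^ (-(2 / α)) * rh ^ 2)) := by
        linear_combination μs * hTs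
      rw [he]
      have hd := mul_add (θs ^ (2 / α)) (pt * ls) (lp * (η ^ (-(2 / α)) * rh ^ 2))
      linarith [h3]
    have key : pt * ls ≤ θs ^ (-(2 / α)) * μs - η ^ (-(2 / α)) * rh ^ 2 * lp :=
      le_of_mul_le_mul_left h4 hTs0
    exact mul_le_mul_of_nonneg_right key hlog
  · rw [hPsPp, hptM]; exact hprim
  · rw [hPsPp, hKinv, hptM]; exact hsec.le
  · rw [hptM]
end

section
/- Let α > 2 and let θ_p, θ_s, P_p, p_t, μ_p, μ_s, η, r_h, λ_p be reals with θ_p, θ_s, P_p, p_t, μ_p, μ_s, r_h > 0, 0 < η ≤ 1, λ_p ≥ 0, and θ_p^{−2/α}·μ_p − λ_p > 0. Suppose η·r_h^{−α} ≥ (θ_s/θ_p)·(μ_s/μ_p)^{−α/2}. Consider the feasible set S of pairs (P_s, λ_s) with 0 < P_s ≤ η·P_p·r_h^{−α}, λ_s ≥ 0, θ_p^{2/α}·(p_t·λ_s·(P_s/P_p)^{2/α} + λ_p) ≤ μ_p, and θ_s^{2/α}·(p_t·λ_s + λ_p·(P_s/P_p)^{−2/α}) ≤ μ_s. Then the maximum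 of the objective p_t·λ_s·log₂(1+θ_s) over S equals (θ_s^{−2/α}·μ_s − (θ_s/θ_p)^{−2/α}·(μ_s/μ_p)·λ_p)·log₂(1+θ_s), and it is attained at P_s* = (θ_s/θ_p)·(μ_s/μ_p)^{−α/2}·P_p and λ_s* = (1/p_t)·(θ_s^{−2/α}·μ_s − (θ_s/θ_p)^{−2/α}·(μ_s/μ_p)·λ_p). -/
/-- Key algebraic bound: under the two constraints, `s ≤ Z⁻¹ μs - (Y/Z)(μs/μp) lp`. -/
lemma stmt9_aux (Y Z μp μs lp s x : ℝ) (hY : 0 < Y) (hZ : 0 < Z)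
    (hμp : 0 < μp) (hμs : 0 < μs) (hlp : 0 ≤ lp) (hs : 0 ≤ s) (hx : 0 < x)
    (h1 : 0 < Y⁻¹ * μp - lp)
    (hi : Y * (s * x + lp) ≤ μp) (hii : Z * (s + lp / x) ≤ μs) :
    s ≤ Z⁻¹ * μs - (Y / Z) * (μs / μp) * lp := by
  set xs : ℝ := (Z * μp) / (Y * μs) with hxs
  have hxs0 : 0 < xs := by positivity
  have hM : Z⁻¹ * μs - (Y / Z) * (μs / μp) * lp = (Y⁻¹ * μp - lp) / xs := by
    rw [hxs]; field_simp
  rw [hM]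
  rcases le_total x xs with h | h
  · -- second constraint binds
    have e1 : s + lp / x ≤ μs / Z := by
      rw [le_div_iff₀ hZ]; nlinarith
    have e2 : lp / xs ≤ lp / x := div_le_div_of_nonneg_left hlp hx h
    have e3 : μs / Z - lp / xs = (Y⁻¹ * μp - lp) / xs := by
      rw [hxs]; field_simp
    linarith [e3 ▸ (by linarith : s ≤ μs / Z - lp / xs)]
  · -- first constraint binds
    have e1 : s * x ≤ Y⁻¹ * μp - lp := by
      have h' : Y * (s * x) ≤ Y * (Y⁻¹ * μp - lp) := by
        have e : Y * (Y⁻¹ * μp - lp) = μp - Y * lp := by field_simp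
        rw [e]; nlinarith
      exact le_of_mul_le_mul_left h' hY
    have e2 : s * xs ≤ s * x := mul_le_mul_of_nonneg_left h hs
    rw [le_div_iff₀ hxs0]; linarith

/-- Case 2 of Proposition 2: if `η r_h^{-α} ≥ (θ_s/θ_p)(μ_s/μ_p)^{-α/2}`, the maximum
secondary throughput over the feasible set is
`(θ_s^{-2/α} μ_s - (θ_s/θ_p)^{-2/α}(μ_s/μ_p) l_p) log₂(1+θ_s)`, attained at
`P_s* = (θ_s/θ_p)(μ_s/μ_p)^{-α/2} P_p` and
`l_s* = (1/p_t)(θ_s^{-2/α} μ_s - (θ_s/θ_p)^{-2/α}(μ_s/μ_p) l_p)`. -/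
theorem stmt9 (α θp θs Pp pt μp μs η rh lp : ℝ)
    (hα : 2 < α) (hθp : 0 < θp) (hθs : 0 < θs) (hPp : 0 < Pp) (hpt : 0 < pt)
    (hμp : 0 < μp) (hμs : 0 < μs) (hrh : 0 < rh) (hη0 : 0 < η) (hη1 : η ≤ 1)
    (hlp : 0 ≤ lp)
    (h1 : 0 < θp ^ (-(2 / α)) * μp - lp)
    (hcase : (θs / θp) * (μs / μp) ^ (-(α / 2)) ≤ η * rh ^ (-α)) :
    IsGreatest
      {c : ℝ | ∃ Ps ls : ℝ, 0 < Ps ∧ Ps ≤ η * Pp * rh ^ (-α) ∧ 0 ≤ ls ∧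
        θp ^ (2 / α) * (pt * ls * (Ps / Pp) ^ (2 / α) + lp) ≤ μp ∧
        θs ^ (2 / α) * (pt * ls + lp * (Ps / Pp) ^ (-(2 / α))) ≤ μs ∧
        c = pt * ls * Real.logb 2 (1 + θs)}
      ((θs ^ (-(2 / α)) * μs - (θs / θp) ^ (-(2 / α)) * (μs / μp) * lp) *
        Real.logb 2 (1 + θs)) ∧
    (0 < (θs / θp) * (μs / μp) ^ (-(α / 2)) * Pp ∧
      (θs / θp) * (μs / μp) ^ (-(α / 2)) * Pp ≤ η * Pp * rh ^ (-α) ∧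
      0 ≤ (1 / pt) * (θs ^ (-(2 / α)) * μs - (θs / θp) ^ (-(2 / α)) * (μs / μp) * lp) ∧
      θp ^ (2 / α) * (pt * ((1 / pt) * (θs ^ (-(2 / α)) * μs -
            (θs / θp) ^ (-(2 / α)) * (μs / μp) * lp)) *
          (((θs / θp) * (μs / μp) ^ (-(α / 2)) * Pp) / Pp) ^ (2 / α) + lp) ≤ μp ∧
      θs ^ (2 / α) * (pt * ((1 / pt) * (θs ^ (-(2 / α)) * μs -
            (θs / θp) ^ (-(2 / α)) * (μs / μp) * lp)) +
          lp * (((θs / θp) * (μs / μp) ^ (-(α / 2)) * Pp) / Pp) ^ (-(2 / α))) ≤ μs ∧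
      pt * ((1 / pt) * (θs ^ (-(2 / α)) * μs - (θs / θp) ^ (-(2 / α)) * (μs / μp) * lp)) *
          Real.logb 2 (1 + θs) =
        (θs ^ (-(2 / α)) * μs - (θs / θp) ^ (-(2 / α)) * (μs / μp) * lp) *
          Real.logb 2 (1 + θs)) := by
  have hα0 : (0:ℝ) < α := by linarith
  have hαne : α ≠ 0 := ne_of_gt hα0
  set Y : ℝ := θp ^ (2 / α) with hYdef
  set Z : ℝ := θs ^ (2 / α) with hZdef
  have hY : 0 < Y := Real.rpow_pos_of_pos hθp _
  have hZ : 0 < Z := Real.rpow_pos_of_pos hθs _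
  -- rpow rewriting facts
  have f1 : θp ^ (-(2 / α)) = Y⁻¹ := by rw [Real.rpow_neg hθp.le, hYdef]
  have f2 : θs ^ (-(2 / α)) = Z⁻¹ := by rw [Real.rpow_neg hθs.le, hZdef]
  have f3 : (θs / θp) ^ (-(2 / α)) = Y / Z := by
    rw [Real.rpow_neg (by positivity), Real.div_rpow hθs.le hθp.le, inv_div, hYdef, hZdef]
  have fexp : -(α / 2) * (2 / α) = -1 := by field_simp
  have f4 : ((θs / θp) * (μs / μp) ^ (-(α / 2))) ^ (2 / α) = (Z / Y) * (μp / μs) := by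
    rw [Real.mul_rpow (by positivity) (by positivity),
      Real.div_rpow hθs.le hθp.le, ← Real.rpow_mul (by positivity), fexp,
      Real.rpow_neg_one, inv_div, hYdef, hZdef]
  have f5 : ((θs / θp) * (μs / μp) ^ (-(α / 2))) ^ (-(2 / α)) = (Y / Z) * (μs / μp) := by
    rw [Real.rpow_neg (by positivity), f4]
    rw [mul_inv, inv_div, inv_div]
  have f6 : ((θs / θp) * (μs / μp) ^ (-(α / 2)) * Pp) / Pp
      = (θs / θp) * (μs / μp) ^ (-(α / 2)) := by
    field_simp
  rw [f1] at h1
  -- the optimal value `M`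
  set M : ℝ := Z⁻¹ * μs - (Y / Z) * (μs / μp) * lp with hMdef
  have hMeq : M = μs * (μp - Y * lp) / (Z * μp) := by rw [hMdef]; field_simp
  have hμYlp : 0 ≤ μp - Y * lp := by nlinarith [mul_pos hY h1, mul_inv_cancel₀ hY.ne']
  have hM0 : 0 ≤ M := by
    rw [hMeq]; exact div_nonneg (mul_nonneg hμs.le hμYlp) (by positivity)
  have hlog : 0 ≤ Real.logb 2 (1 + θs) := Real.logb_nonneg (by norm_num) (by linarith)
  -- the attainment conjunction
  have hatt : (0 < (θs / θp) * (μs / μp) ^ (-(α / 2)) * Pp ∧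
      (θs / θp) * (μs / μp) ^ (-(α / 2)) * Pp ≤ η * Pp * rh ^ (-α) ∧
      0 ≤ (1 / pt) * (θs ^ (-(2 / α)) * μs - (θs / θp) ^ (-(2 / α)) * (μs / μp) * lp) ∧
      θp ^ (2 / α) * (pt * ((1 / pt) * (θs ^ (-(2 / α)) * μs -
            (θs / θp) ^ (-(2 / α)) * (μs / μp) * lp)) *
          (((θs / θp) * (μs / μp) ^ (-(α / 2)) * Pp) / Pp) ^ (2 / α) + lp) ≤ μp ∧
      θs ^ (2 / α) * (pt * ((1 / pt) * (θs ^ (-(2 / α)) * μs -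
            (θs / θp) ^ (-(2 / α)) * (μs / μp) * lp)) +
          lp * (((θs / θp) * (μs / μp) ^ (-(α / 2)) * Pp) / Pp) ^ (-(2 / α))) ≤ μs ∧
      pt * ((1 / pt) * (θs ^ (-(2 / α)) * μs - (θs / θp) ^ (-(2 / α)) * (μs / μp) * lp)) *
          Real.logb 2 (1 + θs) =
        (θs ^ (-(2 / α)) * μs - (θs / θp) ^ (-(2 / α)) * (μs / μp) * lp) *
          Real.logb 2 (1 + θs)) := by
    rw [f2, f3, f6, f4, f5, ← hMdef]
    refine ⟨by positivity, ?_, ?_, ?_, ?_, ?_⟩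
    · calc (θs / θp) * (μs / μp) ^ (-(α / 2)) * Pp
          ≤ (η * rh ^ (-α)) * Pp := mul_le_mul_of_nonneg_right hcase hPp.le
        _ = η * Pp * rh ^ (-α) := by ring
    · exact mul_nonneg (by positivity) hM0
    · have key : Y * (pt * (1 / pt * M) * (Z / Y * (μp / μs)) + lp) = μp := by
        rw [hMdef]; field_simp; ring
      exact le_of_eq key
    · have key : Z * (pt * (1 / pt * M) + lp * (Y / Z * (μs / μp))) = μs := by
        rw [hMdef]; field_simp; ring
      exact le_of_eq key
    · field_simp
  refine ⟨⟨⟨(θs / θp) * (μs / μp) ^ (-(α / 2)) * Pp,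
      (1 / pt) * (θs ^ (-(2 / α)) * μs - (θs / θp) ^ (-(2 / α)) * (μs / μp) * lp),
      hatt.1, hatt.2.1, hatt.2.2.1, hatt.2.2.2.1, hatt.2.2.2.2.1,
      hatt.2.2.2.2.2.symm⟩, ?_⟩, hatt⟩
  -- upper bound
  rintro c ⟨Ps, ls, hPs0, hPsle, hls, hc1, hc2, rfl⟩
  rw [f2, f3, ← hMdef]
  have hx : 0 < (Ps / Pp) ^ (2 / α) := Real.rpow_pos_of_pos (div_pos hPs0 hPp) _
  rw [Real.rpow_neg (div_nonneg hPs0.le hPp.le), ← div_eq_mul_inv] at hc2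
  have hb := stmt9_aux Y Z μp μs lp (pt * ls) ((Ps / Pp) ^ (2 / α)) hY hZ hμp hμs hlp
    (mul_nonneg hpt.le hls) hx h1 hc1 hc2
  exact mul_le_mul_of_nonneg_right hb hlog
end
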